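/- Let (R,V) be a generalized root system, S a base of R, I ⊆ S, and π_I : V → V_I^⊥ the orthogonal projection onto the orthogonal complement of the span of I. Let ν ∈ π_I(R) be nonzero and let R^ν := {β ∈ R : π_I(β) = ν}. Then (R^ν, ≺_S) is a lattice; moreover, for β' = Σ_{α∈S} k'_α α and β'' = Σ_{α∈S} k''_α α in R^ν, the elements Σ_{α∈S} min(k'_α, k''_α) α and Σ_{α∈S} max(k'_α, k''_α) α both belong to R^ν and are, respectively, the greatest lower bound and the least upper bound of β' and β'' in (R^ν, ≺_S). -/

import Mathlib

open scoped RealInnerProductSpace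
set_option linter.unusedSectionVars false

variable {V : Type*} [NormedAddCommGroup V] [InnerProductSpace ℝ V] [FiniteDimensional ℝ V]

/-- A generalized root system: `R` is a nonempty finite spanning set such that for
`α, β ∈ R`: `⟪α,β⟫ < 0` implies `α+β ∈ R`; `⟪α,β⟫ > 0` implies `α-β ∈ R`; and
`⟪α,β⟫ = 0` implies `α+β ∈ R ↔ α-β ∈ R`. -/
def IsGRS (R : Set V) : Prop :=
  R.Nonempty ∧ R.Finite ∧ Submodule.span ℝ R = ⊤ ∧
    ∀ α ∈ R, ∀ β ∈ R,
      (⟪α, β⟫ < 0 → α + β ∈ R) ∧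
      (0 < ⟪α, β⟫ → α - β ∈ R) ∧
      (⟪α, β⟫ = 0 → (α + β ∈ R ↔ α - β ∈ R))

/-- `v` is a linear combination of elements of `S` with nonnegative integer coefficients. -/
def IsNonnegIntComb (S : Set V) (v : V) : Prop :=
  ∃ c : V →₀ ℤ, ↑c.support ⊆ S ∧ (∀ α, 0 ≤ c α) ∧ v = c.sum fun α n => (n : ℝ) • α

/-- A base of a GRS `R`: a subset of `R` which is a vector-space basis of `V` such that
every root is a linear combination of `S` with coefficients all nonnegative integers or
all nonpositive integers. -/
def IsBase (R S : Set V) : Prop :=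
  S ⊆ R ∧ LinearIndependent ℝ ((↑) : S → V) ∧ Submodule.span ℝ S = ⊤ ∧
    ∀ β ∈ R, IsNonnegIntComb S β ∨ IsNonnegIntComb S (-β)

/-- `R⁺(S)`: the roots whose coefficients in `S` are all nonnegative integers. -/
def posRoots (R S : Set V) : Set V := {β ∈ R | IsNonnegIntComb S β}

/-- The partial order `≺_S`: `x ≺_S y` iff `y - x` is a nonnegative integer combination
of `S`. -/
def prec (S : Set V) (x y : V) : Prop := IsNonnegIntComb S (y - x)

/-- `β` is indecomposable in `P`: `β ∈ P` and `β` is not the sum of two nonzero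
elements of `P`. -/
def IsIndecomposableIn (P : Set V) (β : V) : Prop :=
  β ∈ P ∧ ¬∃ γ ∈ P, ∃ δ ∈ P, γ ≠ 0 ∧ δ ≠ 0 ∧ β = γ + δ

/-- A positive system of `R`. -/
def IsPositiveSystem (R P : Set V) : Prop :=
  P ⊆ R ∧ (∀ α ∈ P, ∀ β ∈ P, α + β ∈ R → α + β ∈ P) ∧ R = P ∪ -P ∧ P ∩ -P = {0}

/-- Irreducibility of a GRS. -/
def IsIrreducibleGRS (R : Set V) : Prop :=
  ∀ R₁ R₂ : Set V, R = R₁ ∪ R₂ → (∀ α ∈ R₁, ∀ β ∈ R₂, ⟪α, β⟫ = 0) →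
    R₁ ⊆ {0} ∨ R₂ ⊆ {0}

/-- A primitive root of `R`. -/
def IsPrimitive (R : Set V) (α : V) : Prop :=
  α ∈ R ∧ α ≠ 0 ∧ ∀ (k : ℤ) (α' : V), 0 < k → α' ∈ R → α = (k : ℝ) • α' → k = 1

/-- The orthogonal projection `π_I` of `V` onto the orthogonal complement of the span
of `I`. -/
noncomputable def projAway (I : Set V) : V → ↥((Submodule.span ℝ I)ᗮ) :=
  fun v => Submodule.orthogonalProjectionOnto ((Submodule.span ℝ I)ᗮ) v

/-- A root system. -/
def IsRootSystem (Δ : Set V) : Prop :=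
  Δ.Finite ∧ (0 : V) ∉ Δ ∧ Submodule.span ℝ Δ = ⊤ ∧
    ∀ α ∈ Δ, ∀ β ∈ Δ,
      (β - (2 * ⟪β, α⟫ / ⟪α, α⟫) • α ∈ Δ) ∧
      (∃ n : ℤ, 2 * ⟪β, α⟫ / ⟪α, α⟫ = (n : ℝ)) ∧
      ∀ t : ℝ, t • α ∈ Δ → t = 1 ∨ t = -1

variable [DecidableEq V]

/-- `Σ_{α ∈ S} min(k'_α, k''_α) α`. -/
noncomputable def minComb (c' c'' : V →₀ ℤ) : V :=
  ∑ α ∈ c'.support ∪ c''.support, ((min (c' α) (c'' α) : ℤ) : ℝ) • α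

/-- `Σ_{α ∈ S} max(k'_α, k''_α) α`. -/
noncomputable def maxComb (c' c'' : V →₀ ℤ) : V :=
  ∑ α ∈ c'.support ∪ c''.support, ((max (c' α) (c'' α) : ℤ) : ℝ) • α

noncomputable def rsum (t : Finset V) (w : V → ℝ) : V := ∑ α ∈ t, w α • α

noncomputable def vsum (t : Finset V) (w : V → ℤ) : V := ∑ α ∈ t, (w α : ℝ) • α

lemma vsum_eq_rsum (t : Finset V) (w : V → ℤ) : vsum t w = rsum t (fun α => (w α : ℝ)) := rfl

lemma rsum_subset {t u : Finset V} (h : t ⊆ u) {w : V → ℝ}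
    (hw : ∀ α ∈ u, α ∉ t → w α = 0) : rsum u w = rsum t w :=
  (Finset.sum_subset h (fun x hx hx' => by rw [hw x hx hx', zero_smul])).symm

lemma vsum_subset {t u : Finset V} (h : t ⊆ u) {w : V → ℤ}
    (hw : ∀ α ∈ u, α ∉ t → w α = 0) : vsum u w = vsum t w :=
  rsum_subset h (fun α h1 h2 => by rw [hw α h1 h2]; norm_num)

lemma vsum_sub (t : Finset V) (w₁ w₂ : V → ℤ) :
    vsum t (fun α => w₁ α - w₂ α) = vsum t w₁ - vsum t w₂ := by
  simp [vsum, sub_smul, Finset.sum_sub_distrib]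

lemma vsum_add (t : Finset V) (w₁ w₂ : V → ℤ) :
    vsum t (fun α => w₁ α + w₂ α) = vsum t w₁ + vsum t w₂ := by
  simp [vsum, add_smul, Finset.sum_add_distrib]

lemma vsum_neg (t : Finset V) (w : V → ℤ) :
    vsum t (fun α => - w α) = - vsum t w := by
  simp [vsum, Finset.sum_neg_distrib]

lemma zero_coeffs {S : Set V} (hli : LinearIndependent ℝ ((↑) : S → V)) {t : Finset V}
    (ht : ↑t ⊆ S) {w : V → ℝ} (h : rsum t w = 0) : ∀ α ∈ t, w α = 0 := by
  classical
  set l : V →₀ ℝ := Finsupp.onFinset t (fun α => if α ∈ t then w α else 0)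
    (fun a ha => by by_contra h'; simp [h'] at ha) with hl
  have hls : l ∈ Finsupp.supported ℝ ℝ S :=
    (Finsupp.mem_supported ℝ l).2 (subset_trans (Finset.coe_subset.2 Finsupp.support_onFinset_subset) ht)
  have hsum : Finsupp.linearCombination ℝ id l = 0 := by
    rw [Finsupp.linearCombination_apply, Finsupp.sum]
    rw [Finset.sum_subset (Finsupp.support_onFinset_subset)
      (fun x _ hx => by rw [Finsupp.notMem_support_iff.1 hx, zero_smul])]
    rw [← h]
    refine Finset.sum_congr rfl (fun α hα => ?_)
    simp [hl, Finsupp.onFinset_apply, if_pos hα]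
  have h0 : l = 0 := linearIndepOn_iff.1 (linearIndependent_subtype_iff.1 hli) l hls hsum
  intro α hα
  have := DFunLike.congr_fun h0 α
  simpa [hl, Finsupp.onFinset_apply, if_pos hα] using this

lemma coeff_eq {S : Set V} (hli : LinearIndependent ℝ ((↑) : S → V)) {U : Finset V}
    (hU : ↑U ⊆ S) {w₁ w₂ : V → ℝ} (h : rsum U w₁ = rsum U w₂) : ∀ α ∈ U, w₁ α = w₂ α := by
  have h0 : rsum U (fun α => w₁ α - w₂ α) = 0 := by
    have : rsum U (fun α => w₁ α - w₂ α) = rsum U w₁ - rsum U w₂ := by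
      simp [rsum, sub_smul, Finset.sum_sub_distrib]
    rw [this, h, sub_self]
  intro α hα
  have := zero_coeffs hli hU h0 α hα
  linarith

lemma coeff_eqz {S : Set V} (hli : LinearIndependent ℝ ((↑) : S → V)) {U : Finset V}
    (hU : ↑U ⊆ S) {w₁ w₂ : V → ℤ} (h : vsum U w₁ = vsum U w₂) : ∀ α ∈ U, w₁ α = w₂ α := by
  intro α hα
  exact_mod_cast coeff_eq hli hU (w₁ := fun α => (w₁ α : ℝ)) (w₂ := fun α => (w₂ α : ℝ)) h α hα

lemma isnn_elim {S : Set V} {v : V} (h : IsNonnegIntComb S v) :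
    ∃ t : Finset V, ↑t ⊆ S ∧ ∃ w : V → ℤ, (∀ α, 0 ≤ w α) ∧ (∀ α, α ∉ t → w α = 0) ∧
      v = vsum t w := by
  obtain ⟨c, hcs, hc0, hcv⟩ := h
  exact ⟨c.support, hcs, c, hc0, fun α hα => Finsupp.notMem_support_iff.1 hα,
    by rw [hcv]; rfl⟩

lemma isnn_intro {S : Set V} {t : Finset V} (ht : ↑t ⊆ S) {w : V → ℤ}
    (hw : ∀ α ∈ t, 0 ≤ w α) : IsNonnegIntComb S (vsum t w) := by
  classical
  refine ⟨Finsupp.onFinset t (fun α => if α ∈ t then w α else 0)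
    (fun a ha => by by_contra h'; simp [h'] at ha), ?_, ?_, ?_⟩
  · exact subset_trans (Finset.coe_subset.2 Finsupp.support_onFinset_subset) ht
  · intro α
    simp only [Finsupp.onFinset_apply]
    split
    · exact hw _ ‹_›
    · exact le_refl 0
  · rw [Finsupp.sum]
    rw [Finset.sum_subset (Finsupp.support_onFinset_subset)
      (fun x _ hx => by rw [Finsupp.notMem_support_iff.1 hx]; norm_num)]
    exact (Finset.sum_congr rfl (fun α hα => by simp [Finsupp.onFinset_apply, if_pos hα])).symm

lemma projAway_add (I : Set V) (x y : V) :
    projAway I (x + y) = projAway I x + projAway I y := by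
  unfold projAway; exact map_add (Submodule.orthogonalProjectionOnto ((Submodule.span ℝ I)ᗮ)) x y

lemma projAway_neg (I : Set V) (x : V) : projAway I (-x) = - projAway I x := by
  unfold projAway; exact map_neg (Submodule.orthogonalProjectionOnto ((Submodule.span ℝ I)ᗮ)) x

lemma projAway_zero (I : Set V) : projAway I (0 : V) = 0 := by
  unfold projAway; exact map_zero (Submodule.orthogonalProjectionOnto ((Submodule.span ℝ I)ᗮ))

lemma projAway_span {I : Set V} {x : V} (h : x ∈ Submodule.span ℝ I) :
    projAway I x = 0 :=
  Submodule.orthogonalProjectionOnto_apply_of_mem_orthogonal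
    ((Submodule.span ℝ I).le_orthogonal_orthogonal h)

lemma span_of_projAway {I : Set V} {x : V} (h : projAway I x = 0) :
    x ∈ Submodule.span ℝ I := by
  have := Submodule.orthogonalProjectionOnto_eq_zero_iff.1 h
  rwa [Submodule.orthogonal_orthogonal] at this

lemma grs_zero_mem {R : Set V} (hR : IsGRS R) : (0 : V) ∈ R := by
  obtain ⟨a, ha⟩ := hR.1
  by_cases h : a = 0
  · rwa [h] at ha
  · have hpos : 0 < ⟪a, a⟫ :=
      lt_of_le_of_ne real_inner_self_nonneg (fun h' => h (inner_self_eq_zero.1 h'.symm))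
    have := (hR.2.2.2 a ha a ha).2.1 hpos
    rwa [sub_self] at this

lemma grs_neg_mem {R : Set V} (hR : IsGRS R) {x : V} (hx : x ∈ R) : -x ∈ R := by
  have h0 : (0 : V) ∈ R := grs_zero_mem hR
  have := (hR.2.2.2 0 h0 x hx).2.2 (inner_zero_left x)
  rw [zero_add, zero_sub] at this
  exact this.1 hx

lemma isnn_coeff_nonneg {S : Set V} (hli : LinearIndependent ℝ ((↑) : S → V))
    {t : Finset V} (ht : ↑t ⊆ S) {w : V → ℤ} (h : IsNonnegIntComb S (vsum t w)) :
    ∀ α ∈ t, 0 ≤ w α := by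
  classical
  obtain ⟨t', hts, w', hw0, hwt, hwv⟩ := isnn_elim h
  have hU : (↑(t ∪ t') : Set V) ⊆ S := by
    rw [Finset.coe_union]; exact Set.union_subset ht hts
  have h1 : vsum (t ∪ t') (fun x => if x ∈ t then w x else 0) = vsum (t ∪ t') w' := by
    rw [vsum_subset Finset.subset_union_left (fun x _ hx => by simp [hx]),
      vsum_subset Finset.subset_union_right (fun x _ hx => hwt x hx), ← hwv]
    exact Finset.sum_congr rfl (fun α hα => by simp [if_pos hα])
  intro α hα
  have := coeff_eqz hli hU h1 α (Finset.mem_union_left _ hα)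
  simp only [if_pos hα] at this
  rw [this]; exact hw0 α

lemma base_inner_nonpos {R S : Set V} (hR : IsGRS R) (hS : IsBase R S) {α γ : V}
    (hα : α ∈ S) (hγ : γ ∈ S) (hne : α ≠ γ) : ⟪α, γ⟫ ≤ 0 := by
  classical
  by_contra hpos
  push_neg at hpos
  have hmem : α - γ ∈ R := (hR.2.2.2 α (hS.1 hα) γ (hS.1 hγ)).2.1 hpos
  have hd : Disjoint ({α} : Finset V) {γ} := by simp [hne, Ne.symm hne]
  have h01 : ({α, γ} : Finset V) = {α} ∪ {γ} := rfl
  have hsub : (↑({α, γ} : Finset V) : Set V) ⊆ S := by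
    intro x hx
    simp at hx
    rcases hx with h | h <;> rw [h] <;> assumption
  have hαγ : α - γ = vsum {α, γ} (fun x => if x = α then 1 else if x = γ then -1 else 0) := by
    rw [vsum_eq_rsum]
    unfold rsum
    rw [h01, Finset.sum_union hd]
    simp [hne, Ne.symm hne]
    abel
  rcases hS.2.2.2 _ hmem with hcomb | hcomb
  · rw [hαγ] at hcomb
    have := isnn_coeff_nonneg hS.2.1 hsub hcomb γ (by simp)
    rw [if_neg (Ne.symm hne), if_pos rfl] at this
    omega
  · have hγα : -(α - γ) = vsum {α, γ} (fun x => if x = α then -1 else if x = γ then 1 else 0) := by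
      rw [vsum_eq_rsum]
      unfold rsum
      rw [h01, Finset.sum_union hd]
      simp [hne, Ne.symm hne]
      abel
    rw [hγα] at hcomb
    have := isnn_coeff_nonneg hS.2.1 hsub hcomb α (by simp)
    rw [if_pos rfl] at this
    omega

lemma core {R S I : Set V} (hR : IsGRS R) (hS : IsBase R S) (hI : I ⊆ S)
    (ν : ↥((Submodule.span ℝ I)ᗮ)) (hν0 : ν ≠ 0)
    (T : Finset V) (hT : ↑T ⊆ S) :
    ∀ m : ℕ, ∀ f' f'' : V → ℤ, ∀ β' β'' : V,
      β' ∈ R → β'' ∈ R →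
      β' = vsum T f' → β'' = vsum T f'' →
      (∀ α ∈ T, α ∉ I → f' α = f'' α) →
      projAway I β' = ν → projAway I β'' = ν →
      (∑ α ∈ T, (f' α - f'' α).natAbs) = m →
      vsum T (fun α => max (f' α) (f'' α)) ∈ R ∧
        projAway I (vsum T (fun α => max (f' α) (f'' α))) = ν := by
  intro m
  induction m using Nat.strong_induction_on with
  | _ m IH =>
  intro f' f'' β' β'' hb' hb'' he' he'' hoff hp' hp'' hm
  classical
  by_cases hNe : ∀ α ∈ T, ¬ (f' α < f'' α)
  · have : vsum T (fun α => max (f' α) (f'' α)) = β' := by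
      rw [he']
      exact Finset.sum_congr rfl
        (fun α hα => by simp only [max_eq_left (le_of_not_gt (hNe α hα))])
    rw [this]; exact ⟨hb', hp'⟩
  push_neg at hNe
  by_cases hPe : ∀ α ∈ T, ¬ (f'' α < f' α)
  · have : vsum T (fun α => max (f' α) (f'' α)) = β'' := by
      rw [he'']
      exact Finset.sum_congr rfl
        (fun α hα => by simp only [max_eq_right (le_of_not_gt (hPe α hα))])
    rw [this]; exact ⟨hb'', hp''⟩
  push_neg at hPe
  obtain ⟨α₀, hα₀T, hα₀⟩ := hPe
  obtain ⟨γ₀, hγ₀T, hγ₀⟩ := hNe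
  have hneI : ∀ α ∈ T, f' α ≠ f'' α → α ∈ I := fun α hα h => by
    by_contra h'; exact h (hoff α hα h')
  -- Move B : raise β' towards the max
  by_cases hB : ∃ γ ∈ T, f' γ < f'' γ ∧ ⟪β', γ⟫ < 0
  · obtain ⟨γ, hγT, hγlt, hγneg⟩ := hB
    have hγS : γ ∈ S := hT hγT
    have hγI : γ ∈ I := hneI γ hγT (by omega)
    have hb1 : β' + γ ∈ R := (hR.2.2.2 β' hb' γ (hS.1 hγS)).1 hγneg
    set g : V → ℤ := fun α => if α = γ then f' α + 1 else f' α with hg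
    have he1 : β' + γ = vsum T g := by
      rw [he']
      unfold vsum
      have hpt : ∀ α ∈ T, (g α : ℝ) • α = (f' α : ℝ) • α + (if α = γ then α else 0) := by
        intro α hα
        by_cases h : α = γ
        · subst h
          simp only [hg, if_pos rfl]
          push_cast
          rw [add_smul, one_smul]
        · simp [hg, h]
      rw [Finset.sum_congr rfl hpt, Finset.sum_add_distrib,
        Finset.sum_ite_eq' T γ (fun α => α), if_pos hγT]
    have hoff1 : ∀ α ∈ T, α ∉ I → g α = f'' α := by
      intro α hα hαI
      have hne : α ≠ γ := fun h => hαI (h ▸ hγI)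
      simp only [hg, if_neg hne]
      exact hoff α hα hαI
    have hp1 : projAway I (β' + γ) = ν := by
      rw [projAway_add, projAway_span (Submodule.subset_span hγI), hp', add_zero]
    have hmlt : (∑ α ∈ T, (g α - f'' α).natAbs) < m := by
      rw [← hm]
      refine Finset.sum_lt_sum (fun i hi => ?_) ⟨γ, hγT, ?_⟩
      · by_cases h : i = γ
        · subst h; simp only [hg, if_pos rfl]; omega
        · simp [hg, h]
      · simp only [hg, if_pos rfl]; omega
    have hres := IH _ hmlt g f'' (β' + γ) β'' hb1 hb'' he1 he'' hoff1 hp1 hp'' rfl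
    have heq : vsum T (fun α => max (g α) (f'' α)) = vsum T (fun α => max (f' α) (f'' α)) := by
      refine Finset.sum_congr rfl (fun α hα => ?_)
      by_cases h : α = γ
      · subst h
        have h2 : max (g α) (f'' α) = max (f' α) (f'' α) := by
          simp only [hg, if_pos rfl]; omega
        simp only [h2]
      · simp [hg, h]
    rwa [heq] at hres
  -- Move A' : raise β'' towards the max
  by_cases hA : ∃ δ ∈ T, f'' δ < f' δ ∧ ⟪β'', δ⟫ < 0
  · obtain ⟨δ, hδT, hδlt, hδneg⟩ := hA
    have hδS : δ ∈ S := hT hδT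
    have hδI : δ ∈ I := hneI δ hδT (by omega)
    have hb1 : β'' + δ ∈ R := (hR.2.2.2 β'' hb'' δ (hS.1 hδS)).1 hδneg
    set g : V → ℤ := fun α => if α = δ then f'' α + 1 else f'' α with hg
    have he1 : β'' + δ = vsum T g := by
      rw [he'']
      unfold vsum
      have hpt : ∀ α ∈ T, (g α : ℝ) • α = (f'' α : ℝ) • α + (if α = δ then α else 0) := by
        intro α hα
        by_cases h : α = δ
        · subst h
          simp only [hg, if_pos rfl]
          push_cast
          rw [add_smul, one_smul]
        · simp [hg, h]
      rw [Finset.sum_congr rfl hpt, Finset.sum_add_distrib,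
        Finset.sum_ite_eq' T δ (fun α => α), if_pos hδT]
    have hoff1 : ∀ α ∈ T, α ∉ I → f' α = g α := by
      intro α hα hαI
      have hne : α ≠ δ := fun h => hαI (h ▸ hδI)
      simp only [hg, if_neg hne]
      exact hoff α hα hαI
    have hp1 : projAway I (β'' + δ) = ν := by
      rw [projAway_add, projAway_span (Submodule.subset_span hδI), hp'', add_zero]
    have hmlt : (∑ α ∈ T, (f' α - g α).natAbs) < m := by
      rw [← hm]
      refine Finset.sum_lt_sum (fun i hi => ?_) ⟨δ, hδT, ?_⟩
      · by_cases h : i = δ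
        · subst h; simp only [hg, if_pos rfl]; omega
        · simp [hg, h]
      · simp only [hg, if_pos rfl]; omega
    have hres := IH _ hmlt f' g β' (β'' + δ) hb' hb1 he' he1 hoff1 hp' hp1 rfl
    have heq : vsum T (fun α => max (f' α) (g α)) = vsum T (fun α => max (f' α) (f'' α)) := by
      refine Finset.sum_congr rfl (fun α hα => ?_)
      by_cases h : α = δ
      · subst h
        have h2 : max (f' α) (g α) = max (f' α) (f'' α) := by
          simp only [hg, if_pos rfl]; omega
        simp only [h2]
      · simp [hg, h]
    rwa [heq] at hres
  -- No move possible : contradiction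
  exfalso
  push_neg at hB hA
  set N := T.filter (fun α => f' α < f'' α) with hN
  set P := T.filter (fun α => f'' α < f' α) with hP
  set θp := vsum P (fun α => f' α - f'' α) with hθp
  set θm := vsum N (fun α => f'' α - f' α) with hθm
  set M := vsum T (fun α => min (f' α) (f'' α)) with hM
  have hPT : P ⊆ T := Finset.filter_subset _ _
  have hNT : N ⊆ T := Finset.filter_subset _ _
  have hmemP : ∀ α, α ∈ P ↔ (α ∈ T ∧ f'' α < f' α) := fun α => Finset.mem_filter
  have hmemN : ∀ α, α ∈ N ↔ (α ∈ T ∧ f' α < f'' α) := fun α => Finset.mem_filter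
  have hMp : β' = M + θp := by
    rw [he', hM, hθp]
    have h1 : vsum T f' =
        vsum T (fun α => min (f' α) (f'' α)) + vsum T (fun α => f' α - min (f' α) (f'' α)) := by
      rw [← vsum_add]
      refine Finset.sum_congr rfl (fun α hα => ?_)
      have h : min (f' α) (f'' α) + (f' α - min (f' α) (f'' α)) = f' α := by omega
      simp only [h]
    rw [h1]
    congr 1
    rw [vsum_subset hPT (fun α hα hαP => by
      rw [hmemP] at hαP; push_neg at hαP
      have := hαP hα; omega)]
    refine Finset.sum_congr rfl (fun α hα => ?_)
    have hα' := (hmemP α).1 hα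
    have h : f' α - min (f' α) (f'' α) = f' α - f'' α := by omega
    simp only [h]
  have hMm : β'' = M + θm := by
    rw [he'', hM, hθm]
    have h1 : vsum T f'' =
        vsum T (fun α => min (f' α) (f'' α)) + vsum T (fun α => f'' α - min (f' α) (f'' α)) := by
      rw [← vsum_add]
      refine Finset.sum_congr rfl (fun α hα => ?_)
      have h : min (f' α) (f'' α) + (f'' α - min (f' α) (f'' α)) = f'' α := by omega
      simp only [h]
    rw [h1]
    congr 1
    rw [vsum_subset hNT (fun α hα hαN => by
      rw [hmemN] at hαN; push_neg at hαN
      have := hαN hα; omega)]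
    refine Finset.sum_congr rfl (fun α hα => ?_)
    have hα' := (hmemN α).1 hα
    have h : f'' α - min (f' α) (f'' α) = f'' α - f' α := by omega
    simp only [h]
  have h1 : 0 ≤ ⟪β', θm⟫ := by
    rw [hθm]
    unfold vsum
    rw [inner_sum]
    refine Finset.sum_nonneg (fun γ hγ => ?_)
    rw [real_inner_smul_right]
    have hγ' := (hmemN γ).1 hγ
    have hc : (0:ℝ) ≤ ((f'' γ - f' γ : ℤ) : ℝ) := by exact_mod_cast (by omega : (0:ℤ) ≤ f'' γ - f' γ)
    exact mul_nonneg hc (hB γ hγ'.1 hγ'.2)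
  have h2 : 0 ≤ ⟪θp, β''⟫ := by
    rw [hθp]
    unfold vsum
    rw [sum_inner]
    refine Finset.sum_nonneg (fun α hα => ?_)
    rw [real_inner_smul_left, real_inner_comm]
    have hα' := (hmemP α).1 hα
    have hc : (0:ℝ) ≤ ((f' α - f'' α : ℤ) : ℝ) := by exact_mod_cast (by omega : (0:ℤ) ≤ f' α - f'' α)
    exact mul_nonneg hc (hA α hα'.1 hα'.2)
  have h3 : ⟪θp, θm⟫ ≤ 0 := by
    rw [hθp]
    unfold vsum
    rw [sum_inner]
    refine Finset.sum_nonpos (fun α hα => ?_)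
    rw [real_inner_smul_left]
    have hα' := (hmemP α).1 hα
    have hc : (0:ℝ) ≤ ((f' α - f'' α : ℤ) : ℝ) := by exact_mod_cast (by omega : (0:ℤ) ≤ f' α - f'' α)
    refine mul_nonpos_of_nonneg_of_nonpos hc ?_
    rw [hθm]
    unfold vsum
    rw [inner_sum]
    refine Finset.sum_nonpos (fun γ hγ => ?_)
    rw [real_inner_smul_right]
    have hγ' := (hmemN γ).1 hγ
    have hc' : (0:ℝ) ≤ ((f'' γ - f' γ : ℤ) : ℝ) := by exact_mod_cast (by omega : (0:ℤ) ≤ f'' γ - f' γ)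
    refine mul_nonpos_of_nonneg_of_nonpos hc' ?_
    refine base_inner_nonpos hR hS (hT hα'.1) (hT hγ'.1) ?_
    intro h
    rw [h] at hα'
    omega
  have h4 : ⟪β', β''⟫ ≤ 0 := by
    by_contra hpos
    push_neg at hpos
    have hd : β' - β'' ∈ R := (hR.2.2.2 β' hb' β'' hb'').2.1 hpos
    have hrep : β' - β'' = vsum T (fun α => f' α - f'' α) := by
      rw [he', he'', ← vsum_sub]
    rcases hS.2.2.2 _ hd with hcomb | hcomb
    · rw [hrep] at hcomb
      have := isnn_coeff_nonneg hS.2.1 hT hcomb γ₀ hγ₀T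
      omega
    · have hrep' : -(β' - β'') = vsum T (fun α => f'' α - f' α) := by
        rw [hrep, ← vsum_neg]
        exact Finset.sum_congr rfl (fun α hα => by norm_num)
      rw [hrep'] at hcomb
      have := isnn_coeff_nonneg hS.2.1 hT hcomb α₀ hα₀T
      omega
  have hMν : projAway I M = ν := by
    have hrep : M - β' = vsum P (fun α => min (f' α) (f'' α) - f' α) := by
      rw [hM, he', ← vsum_sub]
      exact vsum_subset hPT (fun α hα hαP => by
        rw [hmemP] at hαP; push_neg at hαP
        have := hαP hα; omega)
    have hsp : M - β' ∈ Submodule.span ℝ I := by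
      rw [hrep]
      refine Submodule.sum_mem _ (fun α hα => ?_)
      refine Submodule.smul_mem _ _ (Submodule.subset_span ?_)
      have hα' := (hmemP α).1 hα
      exact hneI α hα'.1 (by omega)
    have : M = β' + (M - β') := by abel
    rw [this, projAway_add, projAway_span hsp, hp', add_zero]
  have hM0 : M ≠ 0 := by
    intro h
    rw [h, projAway_zero] at hMν
    exact hν0 hMν.symm
  have hMM : 0 < ⟪M, M⟫ :=
    lt_of_le_of_ne real_inner_self_nonneg (fun h => hM0 (inner_self_eq_zero.1 h.symm))
  have e1 : ⟪β', β''⟫ = ⟪M, M⟫ + ⟪M, θm⟫ + ⟪θp, M⟫ + ⟪θp, θm⟫ := by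
    rw [hMp, hMm, inner_add_left, inner_add_right, inner_add_right]
    ring
  have e2 : ⟪β', θm⟫ = ⟪M, θm⟫ + ⟪θp, θm⟫ := by
    rw [hMp, inner_add_left]
  have e3 : ⟪θp, β''⟫ = ⟪θp, M⟫ + ⟪θp, θm⟫ := by
    rw [hMm, inner_add_right]
  linarith

/-- For nonzero `ν ∈ π_I(R)` the fibre `R^ν`, ordered by `≺_S`, is a
lattice: for `β' = Σ k'_α α`, `β'' = Σ k''_α α` in `R^ν`, the elements
`Σ min(k'_α,k''_α) α` and `Σ max(k'_α,k''_α) α` belong to `R^ν` and are respectively the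
greatest lower bound and the least upper bound of `β'` and `β''` in `(R^ν, ≺_S)`. -/
theorem stmt15 (R S I : Set V) (hR : IsGRS R) (hS : IsBase R S) (hI : I ⊆ S)
    (ν : ↥((Submodule.span ℝ I)ᗮ)) (hν : ν ∈ projAway I '' R) (hν0 : ν ≠ 0)
    (β' β'' : V) (hβ'R : β' ∈ R) (hβ'ν : projAway I β' = ν)
    (hβ''R : β'' ∈ R) (hβ''ν : projAway I β'' = ν)
    (c' c'' : V →₀ ℤ) (hc's : ↑c'.support ⊆ S) (hc''s : ↑c''.support ⊆ S)
    (hc' : β' = c'.sum fun α n => (n : ℝ) • α)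
    (hc'' : β'' = c''.sum fun α n => (n : ℝ) • α) :
    (minComb c' c'' ∈ R ∧ projAway I (minComb c' c'') = ν) ∧
    (maxComb c' c'' ∈ R ∧ projAway I (maxComb c' c'') = ν) ∧
    prec S (minComb c' c'') β' ∧ prec S (minComb c' c'') β'' ∧
    (∀ γ ∈ R, projAway I γ = ν → prec S γ β' → prec S γ β'' →
      prec S γ (minComb c' c'')) ∧
    prec S β' (maxComb c' c'') ∧ prec S β'' (maxComb c' c'') ∧
    (∀ γ ∈ R, projAway I γ = ν → prec S β' γ → prec S β'' γ →
      prec S (maxComb c' c'') γ) := by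
  classical
  set T : Finset V := c'.support ∪ c''.support with hTdef
  have hTS : ↑T ⊆ S := by
    rw [hTdef, Finset.coe_union]; exact Set.union_subset hc's hc''s
  have hc'0 : ∀ α, α ∉ T → c' α = 0 := fun α hα =>
    Finsupp.notMem_support_iff.1 (fun h => hα (Finset.mem_union_left _ h))
  have hc''0 : ∀ α, α ∉ T → c'' α = 0 := fun α hα =>
    Finsupp.notMem_support_iff.1 (fun h => hα (Finset.mem_union_right _ h))
  have he' : β' = vsum T ⇑c' := by
    rw [hc']
    have h0 : c'.sum (fun α n => (n : ℝ) • α) = vsum c'.support ⇑c' := rfl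
    rw [h0]
    exact (vsum_subset Finset.subset_union_left
      (fun α _ hα => Finsupp.notMem_support_iff.1 hα)).symm
  have he'' : β'' = vsum T ⇑c'' := by
    rw [hc'']
    have h0 : c''.sum (fun α n => (n : ℝ) • α) = vsum c''.support ⇑c'' := rfl
    rw [h0]
    exact (vsum_subset Finset.subset_union_right
      (fun α _ hα => Finsupp.notMem_support_iff.1 hα)).symm
  have hminC : minComb c' c'' = vsum T (fun α => min (c' α) (c'' α)) := rfl
  have hmaxC : maxComb c' c'' = vsum T (fun α => max (c' α) (c'' α)) := rfl
  -- the coefficients agree off I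
  have hoff : ∀ α ∈ T, α ∉ I → c' α = c'' α := by
    have hspan : β' - β'' ∈ Submodule.span ℝ I := by
      apply span_of_projAway
      rw [sub_eq_add_neg, projAway_add, projAway_neg, hβ'ν, hβ''ν]
      abel
    obtain ⟨l, hls, hlv⟩ := Submodule.mem_span_set.1 hspan
    have hUS : ↑(T ∪ l.support) ⊆ S := by
      rw [Finset.coe_union]
      exact Set.union_subset hTS (subset_trans hls hI)
    have hsum : rsum (T ∪ l.support) (fun α => ((c' α - c'' α : ℤ) : ℝ))
        = rsum (T ∪ l.support) ⇑l := by
      rw [rsum_subset Finset.subset_union_left (fun α _ hα => by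
        rw [hc'0 α hα, hc''0 α hα]; norm_num)]
      rw [rsum_subset Finset.subset_union_right (fun α _ hα =>
        Finsupp.notMem_support_iff.1 hα)]
      have h1 : rsum T (fun α => ((c' α - c'' α : ℤ) : ℝ)) = β' - β'' := by
        rw [he', he'']
        rw [show rsum T (fun α => ((c' α - c'' α : ℤ) : ℝ))
          = vsum T (fun α => c' α - c'' α) from rfl, vsum_sub]
      have h2 : rsum l.support ⇑l = β' - β'' := by
        rw [← hlv]
        unfold rsum
        rw [Finsupp.sum]
      rw [h1, h2]
    intro α hαT hαI
    have hkey := coeff_eq hS.2.1 hUS hsum α (Finset.mem_union_left _ hαT)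
    have hl0 : l α = 0 := by
      by_contra h
      exact hαI (hls (Finsupp.mem_support_iff.2 h))
    rw [hl0] at hkey
    have : (c' α - c'' α : ℤ) = 0 := by exact_mod_cast hkey
    omega
  -- max part from the core lemma
  have hmax := core hR hS hI ν hν0 T hTS _ ⇑c' ⇑c'' β' β'' hβ'R hβ''R he' he'' hoff
    hβ'ν hβ''ν rfl
  -- min part from the core lemma applied to the negatives
  have hβ'Rn : -β' ∈ R := grs_neg_mem hR hβ'R
  have hβ''Rn : -β'' ∈ R := grs_neg_mem hR hβ''R
  have he'n : -β' = vsum T (fun α => -(c' α)) := by rw [he', ← vsum_neg]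
  have he''n : -β'' = vsum T (fun α => -(c'' α)) := by rw [he'', ← vsum_neg]
  have hoffn : ∀ α ∈ T, α ∉ I → -(c' α) = -(c'' α) := fun α h1 h2 => by
    rw [hoff α h1 h2]
  have hp'n : projAway I (-β') = -ν := by rw [projAway_neg, hβ'ν]
  have hp''n : projAway I (-β'') = -ν := by rw [projAway_neg, hβ''ν]
  have hmin := core hR hS hI (-ν) (neg_ne_zero.2 hν0) T hTS _
    (fun α => -(c' α)) (fun α => -(c'' α)) (-β') (-β'') hβ'Rn hβ''Rn he'n he''n hoffn
    hp'n hp''n rfl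
  have hmineq : vsum T (fun α => max (-(c' α)) (-(c'' α))) = - minComb c' c'' := by
    rw [hminC, ← vsum_neg]
    refine Finset.sum_congr rfl (fun α hα => ?_)
    have h : max (-(c' α)) (-(c'' α)) = -(min (c' α) (c'' α)) := by omega
    simp only [h]
  rw [hmineq] at hmin
  have hminR : minComb c' c'' ∈ R := by
    have := grs_neg_mem hR hmin.1
    rwa [neg_neg] at this
  have hminν : projAway I (minComb c' c'') = ν := by
    have := hmin.2
    rw [projAway_neg] at this
    have := neg_injective this
    exact this
  refine ⟨⟨hminR, hminν⟩, ⟨hmax.1, hmax.2⟩, ?_, ?_, ?_, ?_, ?_, ?_⟩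
  · -- prec min β'
    show IsNonnegIntComb S (β' - minComb c' c'')
    have h : β' - minComb c' c'' = vsum T (fun α => c' α - min (c' α) (c'' α)) := by
      rw [he', hminC, ← vsum_sub]
    rw [h]
    exact isnn_intro hTS (fun α hα => by omega)
  · show IsNonnegIntComb S (β'' - minComb c' c'')
    have h : β'' - minComb c' c'' = vsum T (fun α => c'' α - min (c' α) (c'' α)) := by
      rw [he'', hminC, ← vsum_sub]
    rw [h]
    exact isnn_intro hTS (fun α hα => by omega)
  · -- glb
    intro γ _ _ h1 h2
    obtain ⟨t₁, ht₁, w₁, hw₁0, hw₁t, hv₁⟩ := isnn_elim h1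
    obtain ⟨t₂, ht₂, w₂, hw₂0, hw₂t, hv₂⟩ := isnn_elim h2
    set U : Finset V := T ∪ t₁ ∪ t₂ with hU
    have hUS : ↑U ⊆ S := by
      rw [hU, Finset.coe_union, Finset.coe_union]
      exact Set.union_subset (Set.union_subset hTS ht₁) ht₂
    have hTU : T ⊆ U := subset_trans Finset.subset_union_left Finset.subset_union_left
    have ht₁U : t₁ ⊆ U := subset_trans Finset.subset_union_right Finset.subset_union_left
    have ht₂U : t₂ ⊆ U := Finset.subset_union_right
    have hUc' : vsum U ⇑c' = vsum T ⇑c' := vsum_subset hTU (fun α _ hα => hc'0 α hα)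
    have hUc'' : vsum U ⇑c'' = vsum T ⇑c'' := vsum_subset hTU (fun α _ hα => hc''0 α hα)
    have hUw₁ : vsum U w₁ = vsum t₁ w₁ := vsum_subset ht₁U (fun α _ hα => hw₁t α hα)
    have hUw₂ : vsum U w₂ = vsum t₂ w₂ := vsum_subset ht₂U (fun α _ hα => hw₂t α hα)
    have hkey : ∀ α ∈ U, c' α - w₁ α = c'' α - w₂ α := by
      apply coeff_eqz hS.2.1 hUS
      rw [vsum_sub, vsum_sub, hUc', hUc'', hUw₁, hUw₂, ← he', ← he'', ← hv₁, ← hv₂]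
      abel
    show IsNonnegIntComb S (minComb c' c'' - γ)
    have hγval : γ = β' - vsum t₁ w₁ := by rw [← hv₁]; abel
    have hrep : minComb c' c'' - γ = vsum U (fun α => min (c' α) (c'' α) - c' α + w₁ α) := by
      have hUmin : vsum U (fun α => min (c' α) (c'' α)) = vsum T (fun α => min (c' α) (c'' α)) :=
        vsum_subset hTU (fun α _ hα => by rw [hc'0 α hα, hc''0 α hα]; simp)
      rw [vsum_add, vsum_sub, hUmin, hUw₁, hUc', ← hminC, hγval, he']
      abel
    have hrep2 : minComb c' c'' - γ = vsum U (fun α => min (w₁ α) (w₂ α)) := by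
      rw [hrep]
      refine Finset.sum_congr rfl (fun α hα => ?_)
      have hk := hkey α hα
      have h : min (c' α) (c'' α) - c' α + w₁ α = min (w₁ α) (w₂ α) := by omega
      simp only [h]
    rw [hrep2]
    exact isnn_intro hUS (fun α hα => by
      have := hw₁0 α
      have := hw₂0 α
      omega)
  · show IsNonnegIntComb S (maxComb c' c'' - β')
    have h : maxComb c' c'' - β' = vsum T (fun α => max (c' α) (c'' α) - c' α) := by
      rw [he', hmaxC, ← vsum_sub]
    rw [h]
    exact isnn_intro hTS (fun α hα => by omega)
  · show IsNonnegIntComb S (maxComb c' c'' - β'')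
    have h : maxComb c' c'' - β'' = vsum T (fun α => max (c' α) (c'' α) - c'' α) := by
      rw [he'', hmaxC, ← vsum_sub]
    rw [h]
    exact isnn_intro hTS (fun α hα => by omega)
  · -- lub
    intro γ _ _ h1 h2
    obtain ⟨t₁, ht₁, w₁, hw₁0, hw₁t, hv₁⟩ := isnn_elim h1
    obtain ⟨t₂, ht₂, w₂, hw₂0, hw₂t, hv₂⟩ := isnn_elim h2
    set U : Finset V := T ∪ t₁ ∪ t₂ with hU
    have hUS : ↑U ⊆ S := by
      rw [hU, Finset.coe_union, Finset.coe_union]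
      exact Set.union_subset (Set.union_subset hTS ht₁) ht₂
    have hTU : T ⊆ U := subset_trans Finset.subset_union_left Finset.subset_union_left
    have ht₁U : t₁ ⊆ U := subset_trans Finset.subset_union_right Finset.subset_union_left
    have ht₂U : t₂ ⊆ U := Finset.subset_union_right
    have hUc' : vsum U ⇑c' = vsum T ⇑c' := vsum_subset hTU (fun α _ hα => hc'0 α hα)
    have hUc'' : vsum U ⇑c'' = vsum T ⇑c'' := vsum_subset hTU (fun α _ hα => hc''0 α hα)
    have hUw₁ : vsum U w₁ = vsum t₁ w₁ := vsum_subset ht₁U (fun α _ hα => hw₁t α hα)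
    have hUw₂ : vsum U w₂ = vsum t₂ w₂ := vsum_subset ht₂U (fun α _ hα => hw₂t α hα)
    have hkey : ∀ α ∈ U, c' α + w₁ α = c'' α + w₂ α := by
      apply coeff_eqz hS.2.1 hUS
      rw [vsum_add, vsum_add, hUc', hUc'', hUw₁, hUw₂, ← he', ← he'', ← hv₁, ← hv₂]
      abel
    show IsNonnegIntComb S (γ - maxComb c' c'')
    have hγval : γ = β' + vsum t₁ w₁ := by rw [← hv₁]; abel
    have hrep : γ - maxComb c' c'' = vsum U (fun α => w₁ α + c' α - max (c' α) (c'' α)) := by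
      have hUmax : vsum U (fun α => max (c' α) (c'' α)) = vsum T (fun α => max (c' α) (c'' α)) :=
        vsum_subset hTU (fun α _ hα => by rw [hc'0 α hα, hc''0 α hα]; simp)
      rw [vsum_sub, vsum_add, hUmax, hUw₁, hUc', ← hmaxC, hγval, he']
      abel
    have hrep2 : γ - maxComb c' c'' = vsum U (fun α => min (w₁ α) (w₂ α)) := by
      rw [hrep]
      refine Finset.sum_congr rfl (fun α hα => ?_)
      have hk := hkey α hα
      have h : w₁ α + c' α - max (c' α) (c'' α) = min (w₁ α) (w₂ α) := by omega
      simp only [h]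
    rw [hrep2]
    exact isnn_intro hUS (fun α hα => by
      have := hw₁0 α
      have := hw₂0 α
      omega)
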